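/- Let ẽ_j, j = 1,…,N, be random vectors in R^n with E[ẽ_j ẽ_j^T] ≤ P̃_j where each P̃_j is positive definite. Let a_1,…,a_N be nonnegative weights summing to 1, define P = (∑_j a_j P̃_j^{-1})^{-1} and e = P ∑_j a_j P̃_j^{-1} ẽ_j. Then E[e e^T] ≤ P (consistency of covariance-intersection fusion). -/

import Mathlib

open Matrix MeasureTheory

section CIhelpers

lemma integrable_mul_of_L2 {Ω : Type*} [MeasurableSpace Ω] {μ : Measure Ω} {f g : Ω → ℝ}
    (hf : MemLp f 2 μ) (hg : MemLp g 2 μ) : Integrable (fun ω => f ω * g ω) μ := by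
  have h := ((((hf.add hg).integrable_sq).sub hf.integrable_sq).sub hg.integrable_sq).div_const 2
  exact h.congr (Filter.Eventually.of_forall fun ω => by
    simp only [Pi.sub_apply, Pi.add_apply]; ring)

lemma memL2_dot {Ω : Type*} [MeasurableSpace Ω] {μ : Measure Ω} {n : ℕ} {X : Ω → Fin n → ℝ}
    (hX : ∀ i, MemLp (fun ω => X ω i) 2 μ) (y : Fin n → ℝ) :
    MemLp (fun ω => y ⬝ᵥ X ω) 2 μ := by
  simp only [dotProduct]
  exact memLp_finset_sum _ fun i _ => (hX i).const_mul (y i)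

lemma sum_mulVec' {n : ℕ} {ι : Type*} (s : Finset ι) (M : ι → Matrix (Fin n) (Fin n) ℝ)
    (v : Fin n → ℝ) : (∑ j ∈ s, M j) *ᵥ v = ∑ j ∈ s, M j *ᵥ v := by
  ext i
  simp only [Matrix.mulVec, dotProduct, Matrix.sum_apply, Finset.sum_apply,
    Finset.sum_mul]
  exact Finset.sum_comm

lemma dot_sum' {n : ℕ} {ι : Type*} (s : Finset ι) (v : Fin n → ℝ) (f : ι → Fin n → ℝ) :
    v ⬝ᵥ (∑ j ∈ s, f j) = ∑ j ∈ s, v ⬝ᵥ f j := by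
  simp only [dotProduct, Finset.sum_apply, Finset.mul_sum]
  exact Finset.sum_comm

lemma jensen_sq {N : ℕ} (a d : Fin N → ℝ) (ha : ∀ j, 0 ≤ a j) (hsum : ∑ j, a j = 1) :
    (∑ j, a j * d j) ^ 2 ≤ ∑ j, a j * d j ^ 2 := by
  have h := Finset.sum_mul_sq_le_sq_mul_sq Finset.univ (fun j => Real.sqrt (a j))
    (fun j => Real.sqrt (a j) * d j)
  have e1 : ∀ j : Fin N, Real.sqrt (a j) * (Real.sqrt (a j) * d j) = a j * d j := fun j => by
    rw [← mul_assoc, Real.mul_self_sqrt (ha j)]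
  have e2 : ∀ j : Fin N, Real.sqrt (a j) ^ 2 = a j := fun j => Real.sq_sqrt (ha j)
  simp only [e1, mul_pow, e2] at h
  calc (∑ j, a j * d j) ^ 2 ≤ (∑ j, a j) * ∑ j, a j * d j ^ 2 := h
    _ = ∑ j, a j * d j ^ 2 := by rw [hsum, one_mul]

end CIhelpers

/-- Entrywise expectation of the outer product `X Yᵀ` of two random vectors. -/
noncomputable def Eouter {Ω : Type*} [MeasurableSpace Ω] (μ : Measure Ω) {n m : ℕ}
    (X : Ω → Fin n → ℝ) (Y : Ω → Fin m → ℝ) : Matrix (Fin n) (Fin m) ℝ :=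
  Matrix.of fun i j => ∫ ω, X ω i * Y ω j ∂μ

lemma Eouter_isHermitian {Ω : Type*} [MeasurableSpace Ω] (μ : Measure Ω) {n : ℕ}
    (X : Ω → Fin n → ℝ) : (Eouter μ X X).IsHermitian := by
  ext i j
  simp only [Matrix.conjTranspose_apply, Eouter, Matrix.of_apply, star_trivial]
  exact integral_congr_ae (Filter.Eventually.of_forall fun ω => mul_comm _ _)

lemma dot_Eouter {Ω : Type*} [MeasurableSpace Ω] (μ : Measure Ω) {n : ℕ} {X : Ω → Fin n → ℝ}
    (hX : ∀ i, MemLp (fun ω => X ω i) 2 μ) (u : Fin n → ℝ) :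
    u ⬝ᵥ (Eouter μ X X *ᵥ u) = ∫ ω, (u ⬝ᵥ X ω) ^ 2 ∂μ := by
  have hint : ∀ i j : Fin n, Integrable (fun ω => (u i * X ω i) * (u j * X ω j)) μ :=
    fun i j => integrable_mul_of_L2 ((hX i).const_mul (u i)) ((hX j).const_mul (u j))
  have h1 : ∀ ω, (u ⬝ᵥ X ω) ^ 2 = ∑ i, ∑ j, (u i * X ω i) * (u j * X ω j) := by
    intro ω
    rw [sq, dotProduct, Finset.sum_mul_sum]
  calc u ⬝ᵥ (Eouter μ X X *ᵥ u)
      = ∑ i, ∑ j, ∫ ω, (u i * X ω i) * (u j * X ω j) ∂μ := by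
        simp only [dotProduct, Matrix.mulVec, Eouter, Matrix.of_apply, Finset.mul_sum]
        refine Finset.sum_congr rfl fun i _ => Finset.sum_congr rfl fun j _ => ?_
        have h2 : ∫ ω, (u i * X ω i) * (u j * X ω j) ∂μ
            = (u i * u j) * ∫ ω, X ω i * X ω j ∂μ := by
          rw [← MeasureTheory.integral_const_mul]
          exact integral_congr_ae (Filter.Eventually.of_forall fun ω => by ring)
        rw [h2]; ring
    _ = ∫ ω, ∑ i, ∑ j, (u i * X ω i) * (u j * X ω j) ∂μ := by
        rw [integral_finset_sum _ fun i _ => integrable_finset_sum _ fun j _ => hint i j]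
        exact Finset.sum_congr rfl fun i _ => (integral_finset_sum _ fun j _ => hint i j).symm
    _ = ∫ ω, (u ⬝ᵥ X ω) ^ 2 ∂μ :=
        integral_congr_ae (Filter.Eventually.of_forall fun ω => (h1 ω).symm)

/-- Consistency of covariance-intersection fusion: if `E[ẽⱼ ẽⱼᵀ] ≤ P̃ⱼ` (all `P̃ⱼ`
positive definite) and `aⱼ ≥ 0` sum to 1 (at least one positive), then with
`P = (∑ⱼ aⱼ P̃ⱼ⁻¹)⁻¹` and `e = P ∑ⱼ aⱼ P̃ⱼ⁻¹ ẽⱼ`, one has `E[e eᵀ] ≤ P`. -/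
theorem ci_fusion_consistent {Ω : Type*} [MeasurableSpace Ω] (μ : Measure Ω)
    [IsProbabilityMeasure μ] {n N : ℕ} (etil : Fin N → Ω → Fin n → ℝ)
    (hL2 : ∀ j i, MemLp (fun ω => etil j ω i) 2 μ)
    (Ptil : Fin N → Matrix (Fin n) (Fin n) ℝ)
    (hPtil : ∀ j, (Ptil j).PosDef)
    (hcons : ∀ j, (Ptil j - Eouter μ (etil j) (etil j)).PosSemidef)
    (a : Fin N → ℝ) (ha : ∀ j, 0 ≤ a j) (hsum : ∑ j, a j = 1)
    (hpos : ∃ j, 0 < a j) :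
    ((∑ j, a j • (Ptil j)⁻¹)⁻¹
      - Eouter μ
          (fun ω => ((∑ j, a j • (Ptil j)⁻¹)⁻¹).mulVec
            (∑ j, a j • ((Ptil j)⁻¹.mulVec (etil j ω))))
          (fun ω => ((∑ j, a j • (Ptil j)⁻¹)⁻¹).mulVec
            (∑ j, a j • ((Ptil j)⁻¹.mulVec (etil j ω))))).PosSemidef := by
  set S : Matrix (Fin n) (Fin n) ℝ := ∑ j, a j • (Ptil j)⁻¹ with hSdef
  have hstar : ∀ z : Fin n → ℝ, star z = z := fun z => funext fun i => rfl
  -- symmetry of the inverses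
  have hBsym : ∀ j, ((Ptil j)⁻¹)ᵀ = (Ptil j)⁻¹ := fun j =>
    (Matrix.conjTranspose_eq_transpose_of_trivial _).symm.trans (hPtil j).1.inv
  -- quadratic form of S
  have hexp : ∀ z : Fin n → ℝ, z ⬝ᵥ (S *ᵥ z) = ∑ j, a j * (z ⬝ᵥ ((Ptil j)⁻¹ *ᵥ z)) := by
    intro z
    rw [hSdef, sum_mulVec']
    simp only [Matrix.smul_mulVec]
    rw [dot_sum']
    simp only [dotProduct_smul, smul_eq_mul]
  -- S is positive definite
  have hS : S.PosDef := by
    refine Matrix.PosDef.of_dotProduct_mulVec_pos ?_ ?_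
    · have h1 : Sᵀ = S := by
        rw [hSdef, Matrix.transpose_sum]
        exact Finset.sum_congr rfl fun j _ => by rw [Matrix.transpose_smul, hBsym j]
      exact (Matrix.conjTranspose_eq_transpose_of_trivial _).trans h1
    · intro z hz
      rw [hstar z, hexp z]
      obtain ⟨j₀, hj₀⟩ := hpos
      refine Finset.sum_pos' (fun j _ => mul_nonneg (ha j) ?_)
        ⟨j₀, Finset.mem_univ _, mul_pos hj₀ ?_⟩
      · have h := ((hPtil j).inv.posSemidef).dotProduct_mulVec_nonneg z
        rwa [hstar z] at h
      · have h := (hPtil j₀).inv.dotProduct_mulVec_pos hz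
        rwa [hstar z] at h
  have hSdet : IsUnit S.det := isUnit_iff_ne_zero.mpr hS.det_pos.ne'
  have hSinvT : (S⁻¹)ᵀ = S⁻¹ :=
    (Matrix.conjTranspose_eq_transpose_of_trivial _).symm.trans hS.1.inv
  -- L2 coordinates of the fused error vector
  have hv : ∀ k, MemLp (fun ω => (∑ j, a j • ((Ptil j)⁻¹ *ᵥ etil j ω)) k) 2 μ := by
    intro k
    have h1 : (fun ω => (∑ j, a j • ((Ptil j)⁻¹ *ᵥ etil j ω)) k)
        = fun ω => ∑ j, a j * ((Ptil j)⁻¹ k ⬝ᵥ etil j ω) := by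
      funext ω
      simp only [Finset.sum_apply, Pi.smul_apply, smul_eq_mul]
      rfl
    rw [h1]
    exact memLp_finset_sum _ fun j _ => (memL2_dot (hL2 j) _).const_mul (a j)
  have he : ∀ i, MemLp
      (fun ω => (S⁻¹ *ᵥ (∑ j, a j • ((Ptil j)⁻¹ *ᵥ etil j ω))) i) 2 μ :=
    fun i => memL2_dot hv (S⁻¹ i)
  refine Matrix.PosSemidef.of_dotProduct_mulVec_nonneg ((hS.1.inv).sub (Eouter_isHermitian μ _)) fun x => ?_
  rw [hstar x, Matrix.sub_mulVec, dotProduct_sub, sub_nonneg]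
  rw [dot_Eouter μ he x]
  set w : Fin n → ℝ := x ᵥ* S⁻¹ with hw
  -- pointwise decomposition of the fused error along each sensor
  have hA : ∀ ω, x ⬝ᵥ (S⁻¹ *ᵥ (∑ j, a j • ((Ptil j)⁻¹ *ᵥ etil j ω)))
      = ∑ j, a j * ((w ᵥ* (Ptil j)⁻¹) ⬝ᵥ etil j ω) := by
    intro ω
    rw [Matrix.dotProduct_mulVec, ← hw, dot_sum']
    refine Finset.sum_congr rfl fun j _ => ?_
    rw [dotProduct_smul, smul_eq_mul, Matrix.dotProduct_mulVec]
  have hd : ∀ j, MemLp (fun ω => (w ᵥ* (Ptil j)⁻¹) ⬝ᵥ etil j ω) 2 μ :=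
    fun j => memL2_dot (hL2 j) _
  have hsum2 : MemLp (fun ω => ∑ j, a j * ((w ᵥ* (Ptil j)⁻¹) ⬝ᵥ etil j ω)) 2 μ :=
    memLp_finset_sum _ fun j _ => (hd j).const_mul (a j)
  -- per-sensor bound from consistency
  have hCj : ∀ j, ∫ ω, ((w ᵥ* (Ptil j)⁻¹) ⬝ᵥ etil j ω) ^ 2 ∂μ
      ≤ (w ᵥ* (Ptil j)⁻¹) ⬝ᵥ (Ptil j *ᵥ (w ᵥ* (Ptil j)⁻¹)) := by
    intro j
    rw [← dot_Eouter μ (hL2 j) _]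
    have h := (hcons j).dotProduct_mulVec_nonneg (w ᵥ* (Ptil j)⁻¹)
    rw [hstar, Matrix.sub_mulVec, dotProduct_sub, sub_nonneg] at h
    exact h
  -- algebraic simplification of the per-sensor bound
  have hDj : ∀ j, (w ᵥ* (Ptil j)⁻¹) ⬝ᵥ (Ptil j *ᵥ (w ᵥ* (Ptil j)⁻¹))
      = w ⬝ᵥ ((Ptil j)⁻¹ *ᵥ w) := by
    intro j
    have hdet : IsUnit (Ptil j).det := isUnit_iff_ne_zero.mpr (hPtil j).det_pos.ne'
    rw [Matrix.dotProduct_mulVec, Matrix.vecMul_vecMul, Matrix.nonsing_inv_mul _ hdet,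
      Matrix.vecMul_one, ← Matrix.mulVec_transpose, hBsym j]
  -- the total bound equals the fused quadratic form
  have hEF : ∑ j, a j * (w ⬝ᵥ ((Ptil j)⁻¹ *ᵥ w)) = x ⬝ᵥ (S⁻¹ *ᵥ x) := by
    rw [← hexp w, Matrix.dotProduct_mulVec w S, hw, Matrix.vecMul_vecMul,
      Matrix.nonsing_inv_mul _ hSdet, Matrix.vecMul_one, ← Matrix.mulVec_transpose, hSinvT,
      Matrix.dotProduct_mulVec]
  calc ∫ ω, (x ⬝ᵥ (S⁻¹ *ᵥ (∑ j, a j • ((Ptil j)⁻¹ *ᵥ etil j ω)))) ^ 2 ∂μ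
      = ∫ ω, (∑ j, a j * ((w ᵥ* (Ptil j)⁻¹) ⬝ᵥ etil j ω)) ^ 2 ∂μ :=
        integral_congr_ae (Filter.Eventually.of_forall fun ω => by dsimp only; rw [hA ω])
    _ ≤ ∫ ω, ∑ j, a j * ((w ᵥ* (Ptil j)⁻¹) ⬝ᵥ etil j ω) ^ 2 ∂μ := by
        refine integral_mono hsum2.integrable_sq
          (integrable_finset_sum _ fun j _ => ((hd j).integrable_sq).const_mul (a j))
          fun ω => jensen_sq a _ ha hsum
    _ = ∑ j, a j * ∫ ω, ((w ᵥ* (Ptil j)⁻¹) ⬝ᵥ etil j ω) ^ 2 ∂μ := by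
        rw [integral_finset_sum _ fun j _ => ((hd j).integrable_sq).const_mul (a j)]
        exact Finset.sum_congr rfl fun j _ => MeasureTheory.integral_const_mul _ _
    _ ≤ ∑ j, a j * ((w ᵥ* (Ptil j)⁻¹) ⬝ᵥ (Ptil j *ᵥ (w ᵥ* (Ptil j)⁻¹))) :=
        Finset.sum_le_sum fun j _ => mul_le_mul_of_nonneg_left (hCj j) (ha j)
    _ = ∑ j, a j * (w ⬝ᵥ ((Ptil j)⁻¹ *ᵥ w)) :=
        Finset.sum_congr rfl fun j _ => by rw [hDj j]
    _ = x ⬝ᵥ (S⁻¹ *ᵥ x) := hEF
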